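/- For d ≥ 2 and β, γ > 0, the second moment of the measure proportional to e^{β(γ|x|² − |x|⁴)}dx on ℝ^d exceeds γ/2: (∫_{ℝ^d} |x|² e^{β(γ|x|²−|x|⁴)}dx)/(∫_{ℝ^d} e^{β(γ|x|²−|x|⁴)}dx) > γ/2. Consequently, with v(x) = β(4|x|² − 2γ) and V(x) = β(|x|⁴ − γ|x|²) + const normalizing e^{−V} to a probability, one has ∫ v(x) e^{−V(x)}dx > 0. -/

import Mathlib

open MeasureTheory Real

section Aux
open Set Filter

private lemma oneD {β γ : ℝ} (hβ : 0 < β) (n : ℕ) :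
    IntegrableOn (fun r : ℝ => r ^ n * Real.exp (β * (γ * r ^ 2 - r ^ 4))) (Ioi 0) := by
  set M : ℝ := (β * γ + 1) ^ 2 / (4 * β) with hM
  have hmaj : IntegrableOn (fun r : ℝ => Real.exp M * (r ^ (n : ℝ) * Real.exp (-1 * r ^ 2)))
      (Ioi 0) := (integrableOn_rpow_mul_exp_neg_mul_sq one_pos (by exact neg_one_lt_zero.trans_le (Nat.cast_nonneg n) : (-1:ℝ) < n)).const_mul _
  refine Integrable.mono' hmaj ?_ ?_
  · exact (Continuous.aestronglyMeasurable (by fun_prop)).restrict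
  · filter_upwards [ae_restrict_mem measurableSet_Ioi] with r hr
    have hr0 : (0:ℝ) < r := hr
    rw [Real.norm_eq_abs, abs_of_nonneg (by positivity), Real.rpow_natCast]
    rw [mul_comm (Real.exp M), mul_assoc]
    refine mul_le_mul_of_nonneg_left ?_ (by positivity)
    rw [← Real.exp_add, Real.exp_le_exp]
    have h4 : (0:ℝ) < 4 * β := by linarith
    have key : β * (γ * r ^ 2 - r ^ 4) + r ^ 2 ≤ M := by
      rw [hM, le_div_iff₀ h4]
      nlinarith [sq_nonneg (2 * β * r ^ 2 - (β * γ + 1))]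
    linarith

private lemma gaussE (d : ℕ) :
    Integrable (fun x : EuclideanSpace ℝ (Fin d) => Real.exp (-‖x‖ ^ 2)) := by
  have h := (GaussianFourier.integrable_cexp_neg_mul_sq_norm_add_of_euclideanSpace
    (b := 1) (by norm_num) 0 (0 : EuclideanSpace ℝ (Fin d))).norm
  refine h.congr (Filter.Eventually.of_forall fun x => ?_)
  simp [Complex.norm_exp]
  norm_cast

private lemma intE {β γ : ℝ} (hβ : 0 < β) (d : ℕ) :
    Integrable (fun x : EuclideanSpace ℝ (Fin d) =>
      Real.exp (β * (γ * ‖x‖ ^ 2 - ‖x‖ ^ 4))) ∧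
    Integrable (fun x : EuclideanSpace ℝ (Fin d) =>
      ‖x‖ ^ 2 * Real.exp (β * (γ * ‖x‖ ^ 2 - ‖x‖ ^ 4))) := by
  have h4 : (0:ℝ) < 4 * β := by linarith
  constructor
  · refine ((gaussE d).const_mul (Real.exp ((β * γ + 1) ^ 2 / (4 * β)))).mono'
      (Continuous.aestronglyMeasurable (by fun_prop)) ?_
    refine Filter.Eventually.of_forall fun x => ?_
    set r := ‖x‖
    rw [Real.norm_eq_abs, abs_of_nonneg (le_of_lt (Real.exp_pos _)), ← Real.exp_add,
      Real.exp_le_exp]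
    have key : β * (γ * r ^ 2 - r ^ 4) + r ^ 2 ≤ (β * γ + 1) ^ 2 / (4 * β) := by
      rw [le_div_iff₀ h4]
      nlinarith [sq_nonneg (2 * β * r ^ 2 - (β * γ + 1))]
    linarith
  · refine ((gaussE d).const_mul (Real.exp ((β * γ + 2) ^ 2 / (4 * β)))).mono'
      (Continuous.aestronglyMeasurable (by fun_prop)) ?_
    refine Filter.Eventually.of_forall fun x => ?_
    set r := ‖x‖ with hr
    have hr0 : 0 ≤ r := norm_nonneg x
    rw [Real.norm_eq_abs, abs_of_nonneg (by positivity), ← Real.exp_add]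
    calc r ^ 2 * Real.exp (β * (γ * r ^ 2 - r ^ 4))
        ≤ Real.exp (r ^ 2) * Real.exp (β * (γ * r ^ 2 - r ^ 4)) := by
          refine mul_le_mul_of_nonneg_right ?_ (le_of_lt (Real.exp_pos _))
          linarith [Real.add_one_le_exp (r ^ 2)]
      _ = Real.exp (r ^ 2 + β * (γ * r ^ 2 - r ^ 4)) := (Real.exp_add _ _).symm
      _ ≤ Real.exp ((β * γ + 2) ^ 2 / (4 * β) + -r ^ 2) := by
          rw [Real.exp_le_exp]
          have key : β * (γ * r ^ 2 - r ^ 4) + 2 * r ^ 2 ≤ (β * γ + 2) ^ 2 / (4 * β) := by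
            rw [le_div_iff₀ h4]
            nlinarith [sq_nonneg (2 * β * r ^ 2 - (β * γ + 2))]
          linarith

private lemma keyJ {β γ : ℝ} (hβ : 0 < β) (hγ : 0 < γ) (k : ℕ) :
    0 < ∫ y in Ioi (0:ℝ),
      y ^ (k + 1) * ((y ^ 2 - γ / 2) * Real.exp (β * (γ * y ^ 2 - y ^ 4))) := by
  set g : ℝ → ℝ := fun r => Real.exp (β * (γ * r ^ 2 - r ^ 4)) with hg
  set F : ℝ → ℝ := fun r => r ^ k * g r with hF
  set F' : ℝ → ℝ := fun r =>
    (k : ℝ) * r ^ (k - 1) * g r + r ^ k * (β * (γ * (2 * r) - 4 * r ^ 3) * g r) with hF'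
  have hderiv : ∀ x : ℝ, HasDerivAt F (F' x) x := by
    intro x
    have h1 : HasDerivAt (fun r : ℝ => r ^ k) ((k : ℝ) * x ^ (k - 1)) x := hasDerivAt_pow k x
    have hin : HasDerivAt (fun r : ℝ => β * (γ * r ^ 2 - r ^ 4))
        (β * (γ * (2 * x) - 4 * x ^ 3)) x := by
      have := (((hasDerivAt_pow 2 x).const_mul γ).sub (hasDerivAt_pow 4 x)).const_mul β
      refine this.congr_deriv ?_
      ring
    refine (h1.mul hin.exp).congr_deriv ?_
    simp only [hF', hg]
    ring
  have hFtop : Tendsto F atTop (nhds 0) := by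
    set M : ℝ := ((k:ℝ) + 1) + (β * γ + (k:ℝ) + 1) ^ 2 / (4 * β) with hM
    have hb : ∀ᶠ r in atTop, F r ≤ Real.exp M * Real.exp (-r) := by
      filter_upwards [eventually_ge_atTop (0:ℝ)] with r hr
      have h1 : r ^ k ≤ Real.exp ((k:ℝ) * r) := by
        calc r ^ k ≤ (Real.exp r) ^ k :=
              pow_le_pow_left₀ hr (by linarith [Real.add_one_le_exp r]) k
          _ = Real.exp ((k:ℝ) * r) := by rw [← Real.exp_nat_mul]
      calc F r ≤ Real.exp ((k:ℝ) * r) * g r :=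
            mul_le_mul_of_nonneg_right h1 (le_of_lt (Real.exp_pos _))
        _ = Real.exp ((k:ℝ) * r + β * (γ * r ^ 2 - r ^ 4)) := (Real.exp_add _ _).symm
        _ ≤ Real.exp (M + -r) := by
            rw [Real.exp_le_exp, hM]
            have key : β * γ * r ^ 2 + ((k:ℝ) + 1) * r ^ 2 - β * r ^ 4
                ≤ (β * γ + (k:ℝ) + 1) ^ 2 / (4 * β) := by
              rw [le_div_iff₀ (by linarith : (0:ℝ) < 4 * β)]
              nlinarith [sq_nonneg (2 * β * r ^ 2 - (β * γ + (k:ℝ) + 1))]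
            have hrr : ((k:ℝ) + 1) * r ≤ ((k:ℝ) + 1) * r ^ 2 + ((k:ℝ) + 1) := by
              have : r ≤ r ^ 2 + 1 := by nlinarith [sq_nonneg (r - 1)]
              nlinarith [Nat.cast_nonneg (α := ℝ) k]
            nlinarith
        _ = Real.exp M * Real.exp (-r) := Real.exp_add _ _
    have hnn : ∀ᶠ r in atTop, 0 ≤ F r := by
      filter_upwards [eventually_ge_atTop (0:ℝ)] with r hr
      positivity
    have hg0 : Tendsto (fun r : ℝ => Real.exp M * Real.exp (-r)) atTop (nhds 0) := by
      simpa using (Real.tendsto_exp_neg_atTop_nhds_zero).const_mul (Real.exp M)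
    exact squeeze_zero' hnn hb hg0
  have hFint : IntegrableOn F' (Ioi 0) := by
    have he : ∀ r : ℝ, F' r = (k : ℝ) * (r ^ (k - 1) * g r)
        + ((2 * β * γ) * (r ^ (k + 1) * g r) + (-4 * β) * (r ^ (k + 3) * g r)) := by
      intro r
      simp only [hF', hg]
      ring
    rw [show F' = _ from funext he]
    exact (((oneD hβ (k-1)).const_mul _).add
      (((oneD hβ (k+1)).const_mul _).add ((oneD hβ (k+3)).const_mul _)))
  have hIBP : ∫ r in Ioi (0:ℝ), F' r = 0 - F 0 :=
    integral_Ioi_of_hasDerivAt_of_tendsto' (fun x _ => hderiv x) hFint hFtop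
  -- rewrite target
  have hEq : ∀ y : ℝ, y ^ (k + 1) * ((y ^ 2 - γ / 2) * g y)
      = (1 / (4 * β)) * ((k : ℝ) * (y ^ (k - 1) * g y) - F' y) := by
    intro y
    simp only [hF', hg]
    field_simp
    ring
  have hint1 : IntegrableOn (fun y : ℝ => (k:ℝ) * (y ^ (k-1) * g y)) (Ioi 0) :=
    (oneD hβ (k-1)).const_mul _
  calc (0:ℝ) < (1 / (4 * β)) * ((k : ℝ) * (∫ y in Ioi (0:ℝ), y ^ (k - 1) * g y) + F 0) := by
        rcases Nat.eq_zero_or_pos k with hk | hk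
        · have : F 0 = 1 := by simp [hF, hg, hk]
          rw [hk, this]
          simp
          positivity
        · have hF0 : F 0 = 0 := by
            simp [hF, hg, zero_pow (by omega : k ≠ 0)]
          have hA : 0 < ∫ y in Ioi (0:ℝ), y ^ (k - 1) * g y := by
            have hnn : 0 ≤ᵐ[volume.restrict (Ioi (0:ℝ))]
                (fun y : ℝ => y ^ (k - 1) * g y) := by
              filter_upwards [ae_restrict_mem measurableSet_Ioi] with y hy
              have : (0:ℝ) < y := hy
              positivity
            rw [setIntegral_pos_iff_support_of_nonneg_ae hnn (oneD hβ (k-1))]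
            have hsub : Ioi (0:ℝ) ⊆
                (Function.support fun y : ℝ => y ^ (k - 1) * g y) ∩ Ioi 0 := by
              intro y hy
              have hy' : (0:ℝ) < y := hy
              refine ⟨?_, hy⟩
              simp only [Function.mem_support, hg]
              positivity
            refine lt_of_lt_of_le ?_ (measure_mono hsub)
            rw [Real.volume_Ioi]
            exact ENNReal.zero_lt_top
          rw [hF0]
          have hk' : (0:ℝ) < (k:ℝ) := by exact_mod_cast hk
          have := mul_pos hk' hA
          positivity
    _ = (1 / (4 * β)) * ((k : ℝ) * (∫ y in Ioi (0:ℝ), y ^ (k - 1) * g y)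
          - ∫ r in Ioi (0:ℝ), F' r) := by rw [hIBP]; ring
    _ = (1 / (4 * β)) * ((∫ y in Ioi (0:ℝ), (k:ℝ) * (y ^ (k - 1) * g y))
          - ∫ r in Ioi (0:ℝ), F' r) := by rw [integral_const_mul]
    _ = ∫ y in Ioi (0:ℝ), (1 / (4 * β)) * ((k:ℝ) * (y ^ (k - 1) * g y) - F' y) := by
        rw [← integral_sub hint1 hFint, ← integral_const_mul]
    _ = ∫ y in Ioi (0:ℝ), y ^ (k + 1) * ((y ^ 2 - γ / 2) * g y) := by
        exact integral_congr_ae (Filter.Eventually.of_forall fun y => (hEq y).symm)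

end Aux

open Set Filter in
theorem mexican_hat_second_moment {d : ℕ} (hd : 2 ≤ d) (β γ : ℝ) (hβ : 0 < β) (hγ : 0 < γ) :
    γ / 2 < (∫ x : EuclideanSpace ℝ (Fin d), ‖x‖ ^ 2 * Real.exp (β * (γ * ‖x‖ ^ 2 - ‖x‖ ^ 4))) /
        (∫ x : EuclideanSpace ℝ (Fin d), Real.exp (β * (γ * ‖x‖ ^ 2 - ‖x‖ ^ 4))) ∧
    ∀ c : ℝ,
      (∫ x : EuclideanSpace ℝ (Fin d), Real.exp (-(β * (‖x‖ ^ 4 - γ * ‖x‖ ^ 2) + c))) = 1 →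
      0 < ∫ x : EuclideanSpace ℝ (Fin d),
        β * (4 * ‖x‖ ^ 2 - 2 * γ) * Real.exp (-(β * (‖x‖ ^ 4 - γ * ‖x‖ ^ 2) + c)) := by
  set E := EuclideanSpace ℝ (Fin d) with hE
  haveI : Nontrivial E := by
    have hfr : 0 < Module.finrank ℝ E := by
      rw [show Module.finrank ℝ E = d from finrank_euclideanSpace_fin]; omega
    exact Module.nontrivial_of_finrank_pos hfr
  have hIntD := (intE hβ (γ := γ) d).1
  have hIntN := (intE hβ (γ := γ) d).2
  set c₀ : ℝ := (volume (Metric.ball (0:E) 1)).toReal with hc₀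
  have hc₀pos : 0 < c₀ :=
    ENNReal.toReal_pos (Metric.measure_ball_pos volume 0 one_pos).ne' measure_ball_lt_top.ne
  set N := ∫ x : E, ‖x‖ ^ 2 * Real.exp (β * (γ * ‖x‖ ^ 2 - ‖x‖ ^ 4)) with hN
  set D := ∫ x : E, Real.exp (β * (γ * ‖x‖ ^ 2 - ‖x‖ ^ 4)) with hD
  have hDpos : 0 < D := by
    rw [hD, integral_pos_iff_support_of_nonneg (fun x => (Real.exp_pos _).le) hIntD]
    have : Function.support (fun x : E => Real.exp (β * (γ * ‖x‖ ^ 2 - ‖x‖ ^ 4))) = univ := by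
      ext x; simp [Function.mem_support, (Real.exp_pos _).ne']
    rw [this]
    exact isOpen_univ.measure_pos volume univ_nonempty
  -- the key integral
  have hI : 0 < ∫ x : E, (‖x‖ ^ 2 - γ / 2) * Real.exp (β * (γ * ‖x‖ ^ 2 - ‖x‖ ^ 4)) := by
    have hpolar := MeasureTheory.integral_fun_norm_addHaar (volume : Measure E)
      (fun r : ℝ => (r ^ 2 - γ / 2) * Real.exp (β * (γ * r ^ 2 - r ^ 4)))
    rw [finrank_euclideanSpace_fin] at hpolar
    rw [hpolar]
    have hd1 : d - 1 = (d - 2) + 1 := by omega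
    rw [hd1]
    have := keyJ (γ := γ) hβ hγ (d - 2)
    simp only [nsmul_eq_mul, smul_eq_mul]
    have hdpos : (0:ℝ) < (d:ℝ) := by
      have : 0 < d := by omega
      exact_mod_cast this
    exact mul_pos hdpos (mul_pos hc₀pos this)
  have hsplit : ∫ x : E, (‖x‖ ^ 2 - γ / 2) * Real.exp (β * (γ * ‖x‖ ^ 2 - ‖x‖ ^ 4))
      = N - (γ / 2) * D := by
    simp_rw [sub_mul]
    rw [integral_sub hIntN (hIntD.const_mul _), integral_const_mul]
  rw [hsplit] at hI
  constructor
  · rw [lt_div_iff₀ hDpos]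
    linarith
  · intro c _
    have hrw : ∀ x : E, β * (4 * ‖x‖ ^ 2 - 2 * γ) * Real.exp (-(β * (‖x‖ ^ 4 - γ * ‖x‖ ^ 2) + c))
        = (4 * β * Real.exp (-c)) *
          ((‖x‖ ^ 2 - γ / 2) * Real.exp (β * (γ * ‖x‖ ^ 2 - ‖x‖ ^ 4))) := by
      intro x
      rw [show -(β * (‖x‖ ^ 4 - γ * ‖x‖ ^ 2) + c) = β * (γ * ‖x‖ ^ 2 - ‖x‖ ^ 4) + (-c) by ring,
        Real.exp_add]
      ring
    simp_rw [hrw, integral_const_mul]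
    have h4 : 0 < 4 * β * Real.exp (-c) := by positivity
    rw [hsplit]
    exact mul_pos h4 (by linarith)
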